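/- arXiv:1205.1050 — 2 statements merged into one kernel-verified Lean document; each statement's English description precedes it below -/
import Mathlib

section
/- If G is a pointed directed acyclic graph (unique sink reachable from all vertices, indegree ≤ 2) with n vertices, then the pebbling formula Peb(G) has a tree-style resolution refutation of size 2n − 1. -/
attribute [local instance] Classical.propDecidable

/-- A clause: a finite set of literals, a literal being a variable with a sign. -/
abbrev Clause := Finset (ℕ × Bool)

/-- A directed graph with a designated sink vertex. -/
structure PGraph where
  verts : Finset ℕ
  edges : Finset (ℕ × ℕ)
  sink : ℕ

def edgeRel (G : PGraph) (u v : ℕ) : Prop := (u, v) ∈ G.edges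

def Reach (G : PGraph) (u v : ℕ) : Prop := Relation.ReflTransGen (edgeRel G) u v

noncomputable def preds (G : PGraph) (v : ℕ) : Finset ℕ :=
  (G.edges.filter (fun e => e.2 = v)).image Prod.fst

/-- A pointed graph: a DAG whose edges join vertices, indegrees at most 2, with a
unique sink belonging to the graph and reachable from every vertex. -/
def IsPointed (G : PGraph) : Prop :=
  G.sink ∈ G.verts ∧
  (∀ e ∈ G.edges, e.1 ∈ G.verts ∧ e.2 ∈ G.verts) ∧
  (∀ v, ¬ Relation.TransGen (edgeRel G) v v) ∧
  (∀ v ∈ G.verts, (preds G v).card ≤ 2) ∧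
  (∀ v ∈ G.verts, Reach G v G.sink)

/-- The clause of the pebbling formula associated with a vertex: the negations of its
predecessors, together with the vertex itself positively (omitted at the sink, which
plays the role of ⊥). Sources thus get unit clauses. -/
noncomputable def ClauseOf (G : PGraph) (v : ℕ) : Clause :=
  ((preds G v).image (fun u => (u, false))) ∪
    (if v = G.sink then (∅ : Clause) else {(v, true)})

/-- The pebbling formula Peb(G). -/
noncomputable def Peb (G : PGraph) : Set Clause := (fun v => ClauseOf G v) '' ↑G.verts

/-- Tree-style resolution derivations: a binary tree whose leaves are (occurrences of)
input clauses and whose internal nodes are resolution inferences on a stated variable. -/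
inductive RTree where
  | leaf : Clause → RTree
  | node : ℕ → RTree → RTree → RTree

/-- Conclusion clause of a resolution tree. -/
def conc : RTree → Clause
  | .leaf C => C
  | .node x l r => (conc l).erase (x, true) ∪ (conc r).erase (x, false)

/-- Validity: leaves are clauses of Σ, and each resolution step resolves a variable
occurring positively in the left premiss and negatively in the right premiss. -/
def valid (S : Set Clause) : RTree → Prop
  | .leaf C => C ∈ S
  | .node x l r => (x, true) ∈ conc l ∧ (x, false) ∈ conc r ∧ valid S l ∧ valid S r

/-- Size: the number of clause occurrences in the tree. -/
def tsize : RTree → ℕ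
  | .leaf _ => 1
  | .node _ l r => tsize l + tsize r + 1

/-- A tree-style resolution refutation of Σ. -/
def IsRefutation (S : Set Clause) (t : RTree) : Prop := valid S t ∧ conc t = ∅

/-- The "frontier clause": negative literals of the unprocessed vertices (those in `U`)
that have an edge to some vertex outside `U`. -/
noncomputable def DCl (G : PGraph) (U : Finset ℕ) : Clause :=
  (U.filter (fun u => ∃ w ∈ G.verts, w ∉ U ∧ (u, w) ∈ G.edges)).image (fun u => (u, false))

lemma mem_preds (G : PGraph) (u v : ℕ) : u ∈ preds G v ↔ (u, v) ∈ G.edges := by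
  simp only [preds, Finset.mem_image, Finset.mem_filter]
  constructor
  · rintro ⟨⟨a, b⟩, ⟨h, rfl⟩, rfl⟩; exact h
  · intro h; exact ⟨(u, v), ⟨h, rfl⟩, rfl⟩

lemma key (G : PGraph) (hG : IsPointed G) :
    ∀ m (U : Finset ℕ), U ⊆ G.verts.erase G.sink →
      (∀ u w, (u, w) ∈ G.edges → w ∈ U → u ∈ U) →
      (G.verts.erase G.sink \ U).card = m →
      ∃ t : RTree, valid (Peb G) t ∧ conc t = DCl G U ∧
        tsize t = 2 * (G.verts.card - U.card) - 1 := by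
  obtain ⟨hsv, hedge, hacyc, -, hreach⟩ := hG
  have hno : ∀ w, (G.sink, w) ∉ G.edges := by
    intro w hw
    exact hacyc G.sink (Relation.TransGen.head' hw (hreach w (hedge _ hw).2))
  intro m
  induction m with
  | zero =>
    intro U hsub hclosed hcard
    have hUeq : U = G.verts.erase G.sink := by
      apply Finset.Subset.antisymm hsub
      intro x hx
      by_contra hxU
      have : x ∈ G.verts.erase G.sink \ U := Finset.mem_sdiff.2 ⟨hx, hxU⟩
      rw [Finset.card_eq_zero] at hcard
      simp [hcard] at this
    refine ⟨.leaf (ClauseOf G G.sink), ⟨G.sink, hsv, rfl⟩, ?_, ?_⟩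
    · show ClauseOf G G.sink = DCl G U
      have hpred : preds G G.sink = U.filter
          (fun u => ∃ w ∈ G.verts, w ∉ U ∧ (u, w) ∈ G.edges) := by
        ext u
        rw [mem_preds, Finset.mem_filter]
        constructor
        · intro hu
          have huV : u ∈ G.verts := (hedge _ hu).1
          have hune : u ≠ G.sink := by
            intro h; exact hno G.sink (h ▸ hu)
          have huU : u ∈ U := hUeq ▸ Finset.mem_erase.2 ⟨hune, huV⟩
          have hsU : G.sink ∉ U := by
            rw [hUeq]; simp
          exact ⟨huU, G.sink, hsv, hsU, hu⟩
        · rintro ⟨huU, w, hwV, hwU, hedg⟩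
          have : w = G.sink := by
            by_contra hws
            exact hwU (hUeq ▸ Finset.mem_erase.2 ⟨hws, hwV⟩)
          exact this ▸ hedg
      simp [ClauseOf, DCl, hpred]
    · have h1 : U.card = G.verts.card - 1 := by
        rw [hUeq, Finset.card_erase_of_mem hsv]
      have h2 : 1 ≤ G.verts.card := Finset.card_pos.2 ⟨G.sink, hsv⟩
      simp only [tsize]
      omega
  | succ m ih =>
    intro U hsub hclosed hcard
    set C := G.verts.erase G.sink \ U with hC
    have hCne : C.Nonempty := Finset.card_pos.1 (by omega)
    obtain ⟨v, hvC, hmin⟩ := Finset.exists_min_image C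
      (fun v => (C.filter (fun u => Relation.TransGen (edgeRel G) u v)).card) hCne
    have hvE : v ∈ G.verts.erase G.sink := (Finset.mem_sdiff.1 hvC).1
    have hvU : v ∉ U := (Finset.mem_sdiff.1 hvC).2
    have hvV : v ∈ G.verts := Finset.mem_of_mem_erase hvE
    have hvs : v ≠ G.sink := (Finset.mem_erase.1 hvE).1
    -- all predecessors of v are already in U
    have hpredU : ∀ u, (u, v) ∈ G.edges → u ∈ U := by
      intro u hu
      by_contra hnu
      have hune : u ≠ G.sink := fun h => hno v (h ▸ hu)
      have huV : u ∈ G.verts := (hedge _ hu).1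
      have huC : u ∈ C := Finset.mem_sdiff.2 ⟨Finset.mem_erase.2 ⟨hune, huV⟩, hnu⟩
      have hlt : (C.filter (fun a => Relation.TransGen (edgeRel G) a u)).card <
          (C.filter (fun a => Relation.TransGen (edgeRel G) a v)).card := by
        apply Finset.card_lt_card
        constructor
        · intro a ha
          rw [Finset.mem_filter] at ha ⊢
          exact ⟨ha.1, ha.2.tail hu⟩
        · intro hss
          have : u ∈ C.filter (fun a => Relation.TransGen (edgeRel G) a v) :=
            Finset.mem_filter.2 ⟨huC, Relation.TransGen.single hu⟩
          have := Finset.mem_filter.1 (hss this)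
          exact hacyc u this.2
      exact absurd (hmin u huC) (by omega)
    set U' := insert v U with hU'
    have hsub' : U' ⊆ G.verts.erase G.sink := Finset.insert_subset hvE hsub
    have hclosed' : ∀ u w, (u, w) ∈ G.edges → w ∈ U' → u ∈ U' := by
      intro u w he hw
      rcases Finset.mem_insert.1 hw with rfl | hw
      · exact Finset.mem_insert_of_mem (hpredU u he)
      · exact Finset.mem_insert_of_mem (hclosed u w he hw)
    have hcard' : (G.verts.erase G.sink \ U').card = m := by
      rw [hU', Finset.sdiff_insert, ← hC, Finset.card_erase_of_mem hvC, hcard]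
      omega
    obtain ⟨t', hval', hconc', hsize'⟩ := ih U' hsub' hclosed' hcard'
    -- v has a successor outside U'
    obtain ⟨w, hvw, -⟩ : ∃ w, edgeRel G v w ∧ Reach G w G.sink := by
      rcases (hreach v hvV).cases_head with h | h
      · exact absurd h hvs
      · exact h
    have hwv : w ≠ v := by
      rintro rfl; exact hacyc w (Relation.TransGen.single hvw)
    have hwU : w ∉ U := fun h => hvU (hclosed v w hvw h)
    have hwU' : w ∉ U' := by
      simp only [hU', Finset.mem_insert]
      rintro (rfl | h)
      · exact hwv rfl
      · exact hwU h
    have hwV : w ∈ G.verts := (hedge _ hvw).2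
    have hvD : (v, false) ∈ DCl G U' := by
      refine Finset.mem_image.2 ⟨v, Finset.mem_filter.2 ⟨Finset.mem_insert_self _ _,
        w, hwV, hwU', hvw⟩, rfl⟩
    have hvT : (v, true) ∈ ClauseOf G v := by
      simp [ClauseOf, hvs]
    refine ⟨.node v (.leaf (ClauseOf G v)) t', ⟨hvT, hconc' ▸ hvD, ⟨v, hvV, rfl⟩, hval'⟩,
      ?_, ?_⟩
    · show (ClauseOf G v).erase (v, true) ∪ (conc t').erase (v, false) = DCl G U
      rw [hconc']
      ext ⟨u, b⟩
      simp only [ClauseOf, DCl, if_neg hvs, Finset.mem_union, Finset.mem_erase,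
        Finset.mem_image, Finset.mem_filter, Finset.mem_insert, Finset.mem_singleton,
        mem_preds, Prod.mk.injEq]
      constructor
      · rintro (⟨hne, (⟨a, ha, rfl, rfl⟩ | ⟨rfl, rfl⟩)⟩ |
            ⟨hne, a, ⟨haU', x, hxV, hxU', hax⟩, rfl, rfl⟩)
        · exact ⟨a, ⟨hpredU a ha, v, hvV, hvU, ha⟩, rfl, rfl⟩
        · exact absurd rfl hne
        · rcases Finset.mem_insert.1 haU' with rfl | haU
          · exact absurd rfl hne
          · exact ⟨a, ⟨haU, x, hxV, fun h => hxU' (Finset.mem_insert_of_mem h), hax⟩, rfl, rfl⟩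
      · rintro ⟨a, ⟨haU, x, hxV, hxU, hax⟩, rfl, rfl⟩
        by_cases hxv : x = v
        · exact Or.inl ⟨by simp, Or.inl ⟨a, hxv ▸ hax, rfl, rfl⟩⟩
        · refine Or.inr ⟨?_, a, ⟨Finset.mem_insert_of_mem haU, x, hxV, ?_, hax⟩, rfl, rfl⟩
          · intro h
            rw [Prod.mk.injEq] at h
            exact hvU (h.1 ▸ haU)
          · simp only [hU', Finset.mem_insert]
            rintro (rfl | h)
            · exact hxv rfl
            · exact hxU h
    · have hcardU' : U'.card = U.card + 1 := Finset.card_insert_of_notMem hvU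
      have hle : U.card + 2 ≤ G.verts.card := by
        have hsU' : G.sink ∉ U' := fun h => by simpa using Finset.mem_erase.1 (hsub' h)
        have : insert G.sink U' ⊆ G.verts :=
          Finset.insert_subset hsv (hsub'.trans (Finset.erase_subset _ _))
        have := Finset.card_le_card this
        rw [Finset.card_insert_of_notMem hsU', hcardU'] at this
        omega
      simp only [tsize, hsize', hcardU']
      omega

/-- If G is a pointed graph with n vertices, then Peb(G) has a tree-style resolution
refutation of size 2n − 1. -/
theorem pebbling_tree_refutation_size (G : PGraph) (hG : IsPointed G) :
    ∃ t : RTree, IsRefutation (Peb G) t ∧ tsize t = 2 * G.verts.card - 1 := by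
  obtain ⟨t, hval, hconc, hsize⟩ := key G hG (G.verts.erase G.sink \ ∅).card ∅
    (Finset.empty_subset _) (by simp) rfl
  refine ⟨t, ⟨hval, ?_⟩, by simpa using hsize⟩
  rw [hconc]
  simp [DCl]
end

section
/- Let G be a pointed graph with n vertices, V its set of n−1 non-sink variables, and p = ⌈log⁵ n⌉. For every d > 0 and all sufficiently large n, there exists a function σ : G → V^p such that for all A ⊆ G and B ⊆ V with |A| = |B| = ⌊dn/log n⌋, the set of variables occurring in the sequences {σ(v) : v ∈ A} intersects B in at least dn/(2 log n) elements. -/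
attribute [local instance] Classical.propDecidable

/-- A total truth assignment satisfies a clause if it makes some literal true. -/
def clauseSat (a : ℕ → Bool) (C : Clause) : Prop :=
  ∃ l ∈ C, (if l.2 then a l.1 else !(a l.1)) = true

/-- A set of clauses is unsatisfiable (contradictory). -/
def Unsat (S : Set Clause) : Prop := ∀ a : ℕ → Bool, ¬ ∀ C ∈ S, clauseSat a C

/-- The set of variables of B hit by some coordinate of some σ(v), v ∈ A:  σ(A) ∩ B. -/
noncomputable def hitSet {p : ℕ} (σ : ℕ → Fin p → ℕ) (A B : Finset ℕ) : Finset ℕ :=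
  B.filter (fun x => ∃ v ∈ A, ∃ i : Fin p, σ v i = x)

attribute [-instance] Classical.propDecidable

lemma card_filter_coe (s : Finset ℕ) (P : ℕ → Prop) [DecidablePred P] :
    ((Finset.univ : Finset ↥s).filter fun (v : ↥s) => P ↑v).card = (s.filter P).card := by
  classical
  apply Finset.card_bij (fun (v : ↥s) _ => (v : ℕ))
  · intro a ha
    simp only [Finset.mem_filter] at ha ⊢
    exact ⟨a.2, ha.2⟩
  · intro a _ b _ h
    exact Subtype.ext h
  · intro b hb
    simp only [Finset.mem_filter] at hb
    exact ⟨⟨b, hb.1⟩, by simp [hb.2], rfl⟩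

lemma exists_avoid {α β ι : Type*} [Fintype α] [DecidableEq α] [Fintype β]
    (s : Finset ι) (t : ι → α → Finset β)
    (h : ∑ j ∈ s, ∏ a, (t j a).card < Fintype.card β ^ Fintype.card α) :
    ∃ g : α → β, ∀ j ∈ s, ∃ a, g a ∉ t j a := by
  classical
  set bad := s.biUnion fun j => Fintype.piFinset (t j) with hbad
  have hcard : bad.card < (Finset.univ : Finset (α → β)).card := by
    calc bad.card ≤ ∑ j ∈ s, (Fintype.piFinset (t j)).card := Finset.card_biUnion_le
    _ = ∑ j ∈ s, ∏ a, (t j a).card := by simp [Fintype.card_piFinset]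
    _ < _ := by rwa [Finset.card_univ, Fintype.card_fun]
  have : ∃ g : α → β, g ∉ bad := by
    by_contra hc
    push_neg at hc
    exact absurd (Finset.card_le_card fun g _ => hc g) (not_le.mpr hcard)
  obtain ⟨g, hg⟩ := this
  refine ⟨g, fun j hj => ?_⟩
  by_contra hc
  push_neg at hc
  exact hg (Finset.mem_biUnion.mpr ⟨j, hj, Fintype.mem_piFinset.mpr hc⟩)

lemma prod_card_ite {W A : Finset ℕ} (hA : A ⊆ W) {β : Type*} [Fintype β] (p : ℕ) (D : Finset β) :
    (∏ a : ↥W × Fin p, (if (a.1 : ℕ) ∈ A then D else (Finset.univ : Finset β)).card)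
      = D.card ^ (A.card * p) * (Fintype.card β) ^ ((W.card - A.card) * p) := by
  classical
  rw [Fintype.prod_prod_type]
  have h1 : ∀ v : ↥W, (∏ _i : Fin p, (if (v:ℕ) ∈ A then D else (Finset.univ : Finset β)).card)
      = (if (v:ℕ) ∈ A then D.card ^ p else (Fintype.card β) ^ p) := by
    intro v
    rw [Finset.prod_const, Finset.card_univ, Fintype.card_fin]
    split <;> simp [Finset.card_univ]
  rw [Finset.prod_congr rfl (fun v _ => h1 v), Finset.prod_ite, Finset.prod_const,
    Finset.prod_const]
  have hca : ((Finset.univ : Finset ↥W).filter fun (v : ↥W) => (v:ℕ) ∈ A).card = A.card := by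
    have h0 := card_filter_coe W (fun x => x ∈ A)
    rw [Finset.filter_mem_eq_inter, Finset.inter_eq_right.mpr hA] at h0
    exact h0
  have hcb : ((Finset.univ : Finset ↥W).filter fun (v : ↥W) => ¬ (v:ℕ) ∈ A).card
      = W.card - A.card := by
    have h2 := Finset.card_filter_add_card_filter_not (s := (Finset.univ : Finset ↥W))
      (fun (v : ↥W) => (v:ℕ) ∈ A)
    rw [hca] at h2
    have h3 : (Finset.univ : Finset ↥W).card = W.card := by
      rw [Finset.card_univ, Fintype.card_coe]
    omega
  rw [hca, hcb, ← pow_mul, ← pow_mul, mul_comm p, mul_comm p]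

lemma key_count (n N m y p q : ℕ) (hn : 1 ≤ n) (hN : 1 ≤ N)
    (hq : (q:ℝ) ≤ (N:ℝ) * Real.exp (-(y:ℝ)/N))
    (h : ((m:ℝ) + y) * Real.log n < (m:ℝ) * p * ((y:ℝ)/N)) :
    n ^ (m + y) * q ^ (m * p) < N ^ (m * p) := by
  have hNpos : (0:ℝ) < N := by exact_mod_cast hN
  have hnpos : (0:ℝ) < n := by exact_mod_cast hn
  have hcast : ((n ^ (m + y) * q ^ (m * p) : ℕ) : ℝ) < ((N ^ (m*p) : ℕ) : ℝ) := by
    push_cast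
    have hqe : (q:ℝ) ^ (m*p) ≤ ((N:ℝ) * Real.exp (-(y:ℝ)/N)) ^ (m*p) :=
      pow_le_pow_left₀ (by positivity) hq _
    have hexp : (n:ℝ) ^ (m+y) = Real.exp ((↑(m+y)) * Real.log n) := by
      rw [Real.exp_nat_mul, Real.exp_log hnpos]
    calc (n:ℝ) ^ (m + y) * (q:ℝ) ^ (m * p)
        ≤ (n:ℝ) ^ (m + y) * ((N:ℝ) * Real.exp (-(y:ℝ)/N)) ^ (m*p) := by
          apply mul_le_mul_of_nonneg_left hqe (by positivity)
      _ = (N:ℝ) ^ (m*p) * Real.exp ((↑(m+y)) * Real.log n + (↑(m*p)) * (-(y:ℝ)/N)) := by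
          rw [mul_pow, ← Real.exp_nat_mul, hexp, Real.exp_add]; ring
      _ < (N:ℝ) ^ (m*p) * 1 := by
          apply mul_lt_mul_of_pos_left _ (by positivity)
          apply Real.exp_lt_one_iff.mpr
          push_cast
          rw [neg_div]
          nlinarith [h]
      _ = (N:ℝ) ^ (m*p) := mul_one _
  exact_mod_cast hcast

open Filter in
lemma eventual_conds (d : ℝ) (hd : 0 < d) : ∃ n₀ : ℕ, ∀ n : ℕ, n₀ ≤ n →
    16 ≤ n ∧ 3 ≤ Real.logb 2 n ∧ 2*d ≤ Real.logb 2 n ∧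
    8*Real.log 2 + 1 ≤ d * Real.logb 2 n ∧ (Real.log n)^2 / n ≤ d * Real.log 2 := by
  have hL : Tendsto (fun n : ℕ => Real.logb 2 n) atTop atTop :=
    (Real.tendsto_logb_atTop one_lt_two).comp tendsto_natCast_atTop_atTop
  have hdL : Tendsto (fun n : ℕ => d * Real.logb 2 n) atTop atTop := hL.const_mul_atTop hd
  have h0 : Tendsto (fun n : ℕ => (Real.log n)^2 / n) atTop (nhds 0) := by
    have := (Real.tendsto_pow_log_div_mul_add_atTop 1 0 2 one_ne_zero).comp
      (tendsto_natCast_atTop_atTop (R := ℝ))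
    simpa [Function.comp_def] using this
  have e1 := Filter.eventually_ge_atTop (16:ℕ)
  have e2 := hL.eventually_ge_atTop 3
  have e3 := hL.eventually_ge_atTop (2*d)
  have e4 := hdL.eventually_ge_atTop (8*Real.log 2 + 1)
  have e5 : ∀ᶠ n : ℕ in atTop, (Real.log n)^2 / n ≤ d * Real.log 2 := by
    have hpos : (0:ℝ) < d * Real.log 2 := by positivity
    exact (h0.eventually_lt_const hpos).mono fun n h => le_of_lt h
  exact Filter.eventually_atTop.mp ((((e1.and e2).and e3).and e4).and e5 |>.mono
    (fun n h => ⟨h.1.1.1.1, h.1.1.1.2, h.1.1.2, h.1.2, h.2⟩))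


lemma keyR_aux {d L c nR mR yR pR NR : ℝ} (hd : 0 < d) (hL3 : 3 ≤ L) (hc : 0 < c)
    (hdL8 : 8*c + 1 ≤ d*L) (hnpos : 0 < nR) (hmpos : 0 < mR)
    (hmlb : d * nR / (2*L) ≤ mR) (hylb : mR/2 ≤ yR) (hym : yR ≤ mR)
    (hNpos : 0 < NR) (hNn : NR ≤ nR) (hplb : L^5 ≤ pR) :
    (mR + yR) * (L*c) < mR * pR * (yR/NR) := by
  have hLpos : 0 < L := by linarith
  have hL4 : 8 * c < d * L^3 := by
    have h9 : (0:ℝ) ≤ L^2 - 9 := by nlinarith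
    nlinarith [mul_nonneg (mul_pos hd hLpos).le h9]
  have h6 : d * nR ≤ 2*L*mR := by
    rw [div_le_iff₀ (show (0:ℝ) < 2*L by linarith)] at hmlb; linarith
  have s1 : d/(4*L) ≤ yR/NR := by
    rw [div_le_div_iff₀ (show (0:ℝ) < 4*L by linarith) hNpos]
    have h7 : d * NR ≤ d * nR := by nlinarith
    nlinarith [h6, h7, mul_nonneg (by linarith : (0:ℝ) ≤ yR - mR/2) hLpos.le]
  have s2 : mR * L^5 * (d/(4*L)) ≤ mR * pR * (yR/NR) :=
    mul_le_mul (mul_le_mul_of_nonneg_left hplb hmpos.le) s1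
      (div_nonneg hd.le (by linarith))
      (mul_nonneg hmpos.le (le_trans (pow_nonneg (by linarith) 5) hplb))
  have s3 : (mR + yR) * (L*c) ≤ 2*mR*(L*c) := by
    nlinarith [mul_nonneg (sub_nonneg.mpr hym) (mul_pos hLpos hc).le]
  have s4 : 2*mR*(L*c) < mR * L^5 * (d/(4*L)) := by
    have h8 : mR * L^5 * (d/(4*L)) = mR * (d * L^4)/4 := by field_simp
    rw [h8]
    have h9 : 8*c*L < d*L^4 := by
      nlinarith [mul_pos (show (0:ℝ) < d*L^3 - 8*c by linarith) hLpos]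
    nlinarith [mul_pos hmpos (show (0:ℝ) < d*L^4 - 8*c*L by linarith)]
  linarith

lemma final_aux {d L mR hit nR : ℝ} (hL : 0 < L) (h1 : mR + 1 ≤ 2*hit)
    (h2 : d*nR/L < mR+1) : d*nR/(2*L) ≤ hit := by
  have heq2 : d*nR/(2*L) = (d*nR/L)/2 := by
    rw [div_div]; ring_nf
  linarith

lemma q_exp_aux {NR yR : ℝ} (h0 : 0 ≤ yR) (hN : 0 < NR) :
    NR - yR ≤ NR * Real.exp (-yR/NR) := by
  rw [neg_div]
  have he := Real.add_one_le_exp (-(yR/NR))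
  have hfs : NR * (1 - yR/NR) = NR - yR := by field_simp
  nlinarith [he, hN]

/-- For every d > 0 and all sufficiently large n: for every pointed graph G with n
vertices there is a map σ assigning to each vertex a sequence of p = ⌈log⁵ n⌉
variables such that for all A ⊆ G and B ⊆ V with |A| = |B| = ⌊dn/log n⌋, the image
σ(A) intersects B in at least dn/(2 log n) variables.  (Logarithms are base 2; the
variables are the non-sink vertices.) -/
theorem good_map_exists (d : ℝ) (hd : 0 < d) :
    ∃ n₀ : ℕ, ∀ n : ℕ, n₀ ≤ n → ∀ G : PGraph, IsPointed G → G.verts.card = n →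
      ∃ σ : ℕ → Fin (⌈(Real.logb 2 n) ^ 5⌉₊) → ℕ,
        (∀ v ∈ G.verts, ∀ i, σ v i ∈ G.verts.erase G.sink) ∧
        ∀ A ⊆ G.verts, ∀ B ⊆ G.verts.erase G.sink,
          A.card = ⌊d * n / Real.logb 2 n⌋₊ → B.card = ⌊d * n / Real.logb 2 n⌋₊ →
          d * n / (2 * Real.logb 2 n) ≤ ((hitSet σ A B).card : ℝ) := by
  classical
  obtain ⟨n₀, hn₀⟩ := eventual_conds d hd
  refine ⟨n₀, fun n hn G hG hcard => ?_⟩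
  obtain ⟨h16, hL3, hL2d, hdL8, hlogsq⟩ := hn₀ n hn
  set L := Real.logb 2 (n:ℝ) with hLdef
  set p := ⌈L ^ 5⌉₊ with hpdef
  set m := ⌊d * (n:ℝ) / L⌋₊ with hmdef
  set y := (m+1)/2 with hydef
  set V' := G.verts.erase G.sink with hV'def
  have hsink : G.sink ∈ G.verts := hG.1
  have hNcard : V'.card = n - 1 := by rw [hV'def, Finset.card_erase_of_mem hsink, hcard]
  set N := n - 1 with hNdef
  clear_value L p m y N
  -- basic real facts
  have hnR : (16:ℝ) ≤ (n:ℝ) := by exact_mod_cast h16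
  have hnpos : (0:ℝ) < n := by linarith
  have hlog2pos : (0:ℝ) < Real.log 2 := Real.log_pos one_lt_two
  have hlog2lb : (0.6931471803:ℝ) < Real.log 2 := Real.log_two_gt_d9
  have hlog2ub : Real.log 2 < 0.6931471808 := Real.log_two_lt_d9
  have hLpos : (0:ℝ) < L := by linarith
  have hlogn : Real.log (n:ℝ) = L * Real.log 2 := by
    rw [hLdef, Real.logb]; field_simp
  have hlognpos : (0:ℝ) < Real.log n := by nlinarith
  -- m bounds
  have hxlb : (2:ℝ) ≤ d * n / L := by
    have h1 : (L*Real.log 2)^2 ≤ d * Real.log 2 * n := by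
      rw [← hlogn]
      rw [div_le_iff₀ hnpos] at hlogsq
      linarith
    have h2 : L^2 * Real.log 2 ≤ d * n := by
      have h1' : (L^2*Real.log 2) * Real.log 2 ≤ (d*n)*Real.log 2 := by
        calc (L^2*Real.log 2)*Real.log 2 = (L*Real.log 2)^2 := by ring
          _ ≤ d*Real.log 2*n := h1
          _ = (d*n)*Real.log 2 := by ring
      exact le_of_mul_le_mul_right h1' hlog2pos
    have h30 : (2:ℝ) ≤ L*Real.log 2 := by nlinarith [hL3, hlog2lb]
    have h3 : 2*L ≤ L^2 * Real.log 2 := by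
      have := mul_le_mul_of_nonneg_left h30 (le_of_lt hLpos)
      calc 2*L = L*2 := by ring
        _ ≤ L*(L*Real.log 2) := this
        _ = L^2*Real.log 2 := by ring
    rw [le_div_iff₀ hLpos]
    linarith
  have hm2 : 2 ≤ m := by
    rw [hmdef]
    exact Nat.le_floor (by exact_mod_cast hxlb)
  have hmub : (m:ℝ) ≤ d * n / L := by
    rw [hmdef]
    exact Nat.floor_le (by positivity)
  have hmlb : d * n / (2*L) ≤ (m:ℝ) := by
    have h1 : d * n / L < (m:ℝ) + 1 := by
      rw [hmdef]; exact Nat.lt_floor_add_one _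
    have h2 : d * n / (2*L) = (d * n / L)/2 := by field_simp
    linarith
  have hym : y ≤ m := by omega
  have hymR : (y:ℝ) ≤ m := by exact_mod_cast hym
  have hylb : (m:ℝ)/2 ≤ (y:ℝ) := by
    have : m ≤ 2*y := by omega
    have : (m:ℝ) ≤ 2*y := by exact_mod_cast this
    linarith
  have hypos : 0 < y := by omega
  -- m ≤ n/2
  have hmn2 : (m:ℝ) ≤ n/2 := by
    have : d / L ≤ 1/2 := by
      rw [div_le_div_iff₀ hLpos two_pos]; linarith
    have h2 : d * n / L = (d/L) * n := by ring
    nlinarith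
  have hyN : y ≤ N := by
    have h1 : (y:ℝ) ≤ n/2 := le_trans hymR hmn2
    have h2 : (y:ℝ) ≤ (n:ℝ) - 1 := by linarith
    have h3 : ((N:ℕ):ℝ) = (n:ℝ) - 1 := by
      rw [hNdef, Nat.cast_sub (by omega)]; norm_num
    exact_mod_cast h3 ▸ h2
  have hN1 : 1 ≤ N := by omega
  have hNR : ((N:ℕ):ℝ) = (n:ℝ) - 1 := by
    rw [hNdef, Nat.cast_sub (by omega)]; norm_num
  have hNpos : (0:ℝ) < N := by rw [hNR]; linarith
  have hplb : L^5 ≤ (p:ℝ) := by rw [hpdef]; exact Nat.le_ceil _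
  have hmpos : (0:ℝ) < m := by exact_mod_cast (by omega : 0 < m)
  -- the key real inequality
  have hkeyR : ((m:ℝ) + y) * Real.log n < (m:ℝ) * p * ((y:ℝ)/N) := by
    rw [hlogn]
    exact keyR_aux hd hL3 hlog2pos hdL8 hnpos hmpos hmlb hylb hymR hNpos
      (by rw [hNR]; linarith) hplb
  -- counting setup
  have hmn : m ≤ n := by
    have : (m:ℝ) ≤ (n:ℝ) := by linarith
    exact_mod_cast this
  have hβ : Fintype.card ↥V' = N := by rw [Fintype.card_coe, hNcard]
  have hα : Fintype.card (↥G.verts × Fin p) = n * p := by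
    rw [Fintype.card_prod, Fintype.card_coe, hcard, Fintype.card_fin]
  set s : Finset (Finset ℕ × Finset ℕ) := (G.verts.powersetCard m) ×ˢ (V'.powersetCard y)
    with hsdef
  set t : Finset ℕ × Finset ℕ → (↥G.verts × Fin p) → Finset ↥V' := fun AY a =>
    if (a.1 : ℕ) ∈ AY.1 then (Finset.univ.filter fun (b : ↥V') => (b:ℕ) ∉ AY.2)
    else Finset.univ with htdef
  have hq : ((N - y:ℕ):ℝ) ≤ ((N:ℕ):ℝ) * Real.exp (-(y:ℝ)/N) := by
    rw [Nat.cast_sub hyN]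
    exact q_exp_aux (by positivity) hNpos
  have hsum : ∑ j ∈ s, ∏ a, (t j a).card
      < Fintype.card ↥V' ^ Fintype.card (↥G.verts × Fin p) := by
    rw [hβ, hα]
    have hterm : ∀ j ∈ s, (∏ a, (t j a).card) = (N - y)^(m*p) * N^((n-m)*p) := by
      intro j hj
      obtain ⟨hjA, hjY⟩ := Finset.mem_product.mp hj
      rw [Finset.mem_powersetCard] at hjA hjY
      have hD : (Finset.univ.filter fun (b : ↥V') => (b:ℕ) ∉ j.2).card = N - y := by
        rw [card_filter_coe V' (fun x => x ∉ j.2), Finset.filter_not,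
          Finset.card_sdiff_of_subset (Finset.filter_subset _ _), Finset.filter_mem_eq_inter,
          Finset.inter_eq_right.mpr hjY.1, hNcard, hjY.2]
      have hpi := prod_card_ite (W := G.verts) (A := j.1) hjA.1 p
        (Finset.univ.filter fun (b : ↥V') => (b:ℕ) ∉ j.2)
      rw [hD, hβ, hjA.2, hcard] at hpi
      rw [htdef]
      exact hpi
    have hsplitpow : N^(n*p) = N^(m*p) * N^((n-m)*p) := by
      rw [← pow_add, ← Nat.add_mul, Nat.add_sub_cancel' hmn]
    have hmain : n.choose m * N.choose y * (N-y)^(m*p) < N^(m*p) := by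
      have h1 : n.choose m ≤ n^m := Nat.choose_le_pow n m
      have h2 : N.choose y ≤ n^y :=
        le_trans (Nat.choose_le_pow N y) (Nat.pow_le_pow_left (by omega) _)
      calc n.choose m * N.choose y * (N-y)^(m*p)
          ≤ n^m * n^y * (N-y)^(m*p) := Nat.mul_le_mul (Nat.mul_le_mul h1 h2) le_rfl
        _ = n^(m+y) * (N-y)^(m*p) := by rw [pow_add]
        _ < N^(m*p) := key_count n N m y p (N-y) (by omega) hN1 hq hkeyR
    calc ∑ j ∈ s, ∏ a, (t j a).card
        = ∑ _j ∈ s, (N-y)^(m*p) * N^((n-m)*p) := Finset.sum_congr rfl hterm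
      _ = s.card * ((N-y)^(m*p) * N^((n-m)*p)) := by
          rw [Finset.sum_const, smul_eq_mul]
      _ = (n.choose m * N.choose y) * ((N-y)^(m*p) * N^((n-m)*p)) := by
          rw [hsdef, Finset.card_product, Finset.card_powersetCard,
            Finset.card_powersetCard, hcard, hNcard]
      _ = (n.choose m * N.choose y * (N-y)^(m*p)) * N^((n-m)*p) := by ring
      _ < N^(m*p) * N^((n-m)*p) :=
          (Nat.mul_lt_mul_right (pow_pos hN1 ((n-m)*p))).mpr hmain
      _ = N^(n*p) := hsplitpow.symm
  obtain ⟨g, hg⟩ := exists_avoid s t hsum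
  have hV'ne : V'.Nonempty := Finset.card_pos.mp (by rw [hNcard]; omega)
  obtain ⟨c₀, hc₀⟩ := hV'ne
  set σ : ℕ → Fin p → ℕ := fun v i => if h : v ∈ G.verts then ((g (⟨v, h⟩, i)) : ℕ) else c₀
    with hσdef
  clear_value σ
  refine ⟨σ, ?_, ?_⟩
  · intro v hv i
    simp only [hσdef]
    rw [dif_pos hv]
    exact (g (⟨v, hv⟩, i)).2
  · intro A hA B hB hAc hBc
    have hMiss : (V'.filter fun x => ∀ v ∈ A, ∀ i : Fin p, σ v i ≠ x).card < y := by
      by_contra hcon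
      push_neg at hcon
      obtain ⟨Y, hYsub, hYcard⟩ := Finset.exists_subset_card_eq hcon
      have hYV : Y ⊆ V' := hYsub.trans (Finset.filter_subset _ _)
      have hjmem : (A, Y) ∈ s := by
        rw [hsdef]
        exact Finset.mem_product.mpr
          ⟨Finset.mem_powersetCard.mpr ⟨hA, hAc⟩, Finset.mem_powersetCard.mpr ⟨hYV, hYcard⟩⟩
      obtain ⟨a, ha⟩ := hg (A, Y) hjmem
      rw [htdef] at ha
      simp only at ha
      by_cases hcc : (a.1 : ℕ) ∈ A
      · rw [if_pos hcc] at ha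
        have hgaY : ((g a : ℕ)) ∈ Y := by
          by_contra h2
          exact ha (Finset.mem_filter.mpr ⟨Finset.mem_univ _, h2⟩)
        have hmiss := hYsub hgaY
        rw [Finset.mem_filter] at hmiss
        have hne := hmiss.2 (a.1 : ℕ) hcc a.2
        apply hne
        simp only [hσdef]
        rw [dif_pos a.1.2]
      · rw [if_neg hcc] at ha
        exact ha (Finset.mem_univ _)
    have hEq : hitSet σ A B = B.filter (fun x => ∃ v ∈ A, ∃ i : Fin p, σ v i = x) := by
      ext x
      simp [hitSet]
    have hsplit := Finset.card_filter_add_card_filter_not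
      (s := B) (fun x => ∃ v ∈ A, ∃ i : Fin p, σ v i = x)
    have hsubM : B.filter (fun x => ¬ ∃ v ∈ A, ∃ i : Fin p, σ v i = x)
        ⊆ V'.filter (fun x => ∀ v ∈ A, ∀ i : Fin p, σ v i ≠ x) := by
      intro x hx
      rw [Finset.mem_filter] at hx ⊢
      refine ⟨hB hx.1, ?_⟩
      have := hx.2
      push_neg at this
      exact this
    have hneg : (B.filter (fun x => ¬ ∃ v ∈ A, ∃ i : Fin p, σ v i = x)).card < y :=
      lt_of_le_of_lt (Finset.card_le_card hsubM) hMiss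
    have hhit2 : m + 1 ≤ 2 * (hitSet σ A B).card := by
      rw [hEq]
      rw [hBc] at hsplit
      omega
    have hcstR : ((m:ℝ)+1) ≤ 2*((hitSet σ A B).card : ℝ) := by exact_mod_cast hhit2
    have hflt : d * n / L < (m:ℝ) + 1 := by
      rw [hmdef]; exact Nat.lt_floor_add_one _
    exact final_aux hLpos hcstR hflt
end
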